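/- For the simplex-constrained minimization of J(λ) = ∑_{i=1}^N p_i/(r_i + λ_i)^{q/2} with ∑λ_i = Λ, λ_i ≥ 0, suppose indices are sorted so that p_1^γ/r_1 ≥ … ≥ p_N^γ/r_N with γ = 2/(q+2), and let k be the unique index with b(k−1) < Λ ≤ b(k), where b(k) = (r_{k+1}/p_{k+1}^γ)·∑_{i=1}^k p_i^γ − ∑_{i=1}^k r_i for k < N and b(N) = ∞, b(0)=0. Then λ*_i = C p_i^γ − r_i for i ≤ k and λ*_i = 0 for i > k, with C = (Λ + ∑_{j=1}^k r_j)/(∑_{j=1}^k p_j^γ), satisfies: λ*_i > 0 for i ≤ k, ∑_i λ*_i = Λ, and the KKT optimality conditions (equal partial derivatives on the support, larger partial derivatives off the support). -/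

import Mathlib

open Finset

/-- Explicit water-filling solution: with sorted indices and `k` determined by
`b(k−1) < Λ ≤ b(k)`, the allocation `λ*_i = C p_i^γ − r_i` for `i < k`, `0` otherwise,
with `C = (Λ + ∑_{j<k} r_j)/(∑_{j<k} p_j^γ)`, is positive on its support, feasible,
and satisfies the KKT conditions (partial derivatives equal on the support and
no larger than those off the support). -/
theorem water_filling_solution
    (N : ℕ) (hN : 1 ≤ N) (p r : ℕ → ℝ) (q Λ : ℝ)
    (hp : ∀ i < N, 0 < p i) (hr : ∀ i < N, 0 < r i) (hq : 0 < q) (hΛ : 0 < Λ)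
    (γ : ℝ) (hγ : γ = 2 / (q + 2))
    (hsorted : ∀ i j, i ≤ j → j < N → p j ^ γ / r j ≤ p i ^ γ / r i)
    (b : ℕ → ℝ)
    (hb : ∀ k, b k = (r k / p k ^ γ) * (∑ i ∈ Finset.range k, p i ^ γ)
                      - ∑ i ∈ Finset.range k, r i)
    (k : ℕ) (hk1 : 1 ≤ k) (hk2 : k ≤ N)
    (hlow : b (k - 1) < Λ) (hupp : k = N ∨ Λ ≤ b k)
    (C : ℝ)
    (hC : C = (Λ + ∑ j ∈ Finset.range k, r j) / (∑ j ∈ Finset.range k, p j ^ γ))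
    (lamStar : ℕ → ℝ)
    (hlam : ∀ i, lamStar i = if i < k then C * p i ^ γ - r i else 0)
    (D : ℕ → ℝ)
    (hD : ∀ i, D i = -(q / 2) * p i * (r i + lamStar i) ^ (-(1 / γ))) :
    (∀ i < k, 0 < lamStar i) ∧
    (∑ i ∈ Finset.range N, lamStar i) = Λ ∧
    (∀ i < k, ∀ j < k, D i = D j) ∧
    (∀ i < k, ∀ j, k ≤ j → j < N → D i ≤ D j) := by
  have hγpos : 0 < γ := by rw [hγ]; positivity
  have hγne : γ ≠ 0 := ne_of_gt hγpos
  -- positivity of p i ^ γ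
  have hpγ : ∀ i < N, 0 < p i ^ γ := fun i hi => Real.rpow_pos_of_pos (hp i hi) γ
  have hSpos : 0 < ∑ j ∈ Finset.range k, p j ^ γ := by
    apply Finset.sum_pos
    · intro i hi
      exact hpγ i (lt_of_lt_of_le (Finset.mem_range.mp hi) hk2)
    · exact ⟨0, Finset.mem_range.mpr hk1⟩
  set S := ∑ j ∈ Finset.range k, p j ^ γ with hS
  set R := ∑ j ∈ Finset.range k, r j with hR
  have hmN : k - 1 < N := by omega
  -- C * S = Λ + R
  have hCS : C * S = Λ + R := by
    rw [hC]; field_simp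
  -- C > r i / p i ^ γ for i < k
  have hrange : k = (k - 1) + 1 := (Nat.succ_pred_eq_of_pos hk1).symm
  have hkey : r (k - 1) / p (k - 1) ^ γ * S < Λ + R := by
    have hb' := hb (k - 1)
    have hpm := hpγ (k - 1) hmN
    have hsplitS : S = (∑ i ∈ Finset.range (k - 1), p i ^ γ) + p (k - 1) ^ γ := by
      rw [hS, hrange, Finset.sum_range_succ]; simp
    have hsplitR : R = (∑ i ∈ Finset.range (k - 1), r i) + r (k - 1) := by
      rw [hR, hrange, Finset.sum_range_succ]; simp
    have hcancel : r (k - 1) / p (k - 1) ^ γ * p (k - 1) ^ γ = r (k - 1) :=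
      div_mul_cancel₀ _ (ne_of_gt hpm)
    rw [hsplitS, hsplitR, mul_add, hcancel]
    rw [hb'] at hlow
    linarith
  have hClt : ∀ i < k, r i / p i ^ γ < C := by
    intro i hi
    have hiN : i < N := lt_of_lt_of_le hi hk2
    have h1 : r i / p i ^ γ ≤ r (k - 1) / p (k - 1) ^ γ := by
      have hs := hsorted i (k - 1) (Nat.le_sub_one_of_lt hi) hmN
      have hpi := hpγ i hiN
      have hpm := hpγ (k - 1) hmN
      have hri := hr i hiN
      have hrm := hr (k - 1) hmN
      rw [div_le_div_iff₀ hrm hri] at hs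
      rw [div_le_div_iff₀ hpi hpm]
      nlinarith
    have h2 : r (k - 1) / p (k - 1) ^ γ < C := by
      rw [hC]
      rw [lt_div_iff₀ hSpos]
      exact hkey
    linarith
  have hCpos : 0 < C := by
    have := hClt 0 hk1
    have h0 : 0 < r 0 / p 0 ^ γ := div_pos (hr 0 (lt_of_lt_of_le hk1 hk2)) (hpγ 0 (lt_of_lt_of_le hk1 hk2))
    linarith
  -- positivity on support
  have hpossup : ∀ i < k, 0 < lamStar i := by
    intro i hi
    have hiN : i < N := lt_of_lt_of_le hi hk2
    rw [hlam i, if_pos hi]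
    have := hClt i hi
    have hpi := hpγ i hiN
    rw [div_lt_iff₀ hpi] at this
    linarith
  refine ⟨hpossup, ?_, ?_, ?_⟩
  · -- sum equals Λ
    have hsplit : ∑ i ∈ Finset.range N, lamStar i = ∑ i ∈ Finset.range k, lamStar i := by
      rw [← Finset.sum_range_add_sum_Ico _ hk2]
      have : ∑ i ∈ Finset.Ico k N, lamStar i = 0 := by
        apply Finset.sum_eq_zero
        intro i hi
        rw [hlam i, if_neg (by simpa using not_lt.mpr (Finset.mem_Ico.mp hi).1)]
      rw [this, add_zero]
    rw [hsplit]
    have : ∑ i ∈ Finset.range k, lamStar i = C * S - R := by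
      rw [Finset.mul_sum, ← Finset.sum_sub_distrib]
      apply Finset.sum_congr rfl
      intro i hi
      rw [hlam i, if_pos (Finset.mem_range.mp hi)]
    rw [this, hCS]; ring
  · -- equal derivatives on support
    have hDval : ∀ i < k, D i = -(q / 2) * C ^ (-(1 / γ)) := by
      intro i hi
      have hiN : i < N := lt_of_lt_of_le hi hk2
      have hpi := hp i hiN
      rw [hD i, hlam i, if_pos hi]
      have harg : r i + (C * p i ^ γ - r i) = C * p i ^ γ := by ring
      rw [harg, Real.mul_rpow hCpos.le (hpγ i hiN).le]
      rw [← Real.rpow_mul hpi.le]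
      have hexp : γ * -(1 / γ) = -1 := by field_simp
      rw [hexp, Real.rpow_neg_one]
      field_simp
    intro i hi j hj
    rw [hDval i hi, hDval j hj]
  · -- off-support inequality
    intro i hi j hkj hjN
    have hDval : D i = -(q / 2) * C ^ (-(1 / γ)) := by
      have hiN : i < N := lt_of_lt_of_le hi hk2
      have hpi := hp i hiN
      rw [hD i, hlam i, if_pos hi]
      have harg : r i + (C * p i ^ γ - r i) = C * p i ^ γ := by ring
      rw [harg, Real.mul_rpow hCpos.le (hpγ i hiN).le]
      rw [← Real.rpow_mul hpi.le]
      have hexp : γ * -(1 / γ) = -1 := by field_simp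
      rw [hexp, Real.rpow_neg_one]
      field_simp
    have hDj : D j = -(q / 2) * (p j * r j ^ (-(1 / γ))) := by
      rw [hD j, hlam j, if_neg (by omega)]
      ring_nf
    have hkN : k < N := lt_of_le_of_lt hkj hjN
    have hupp' : Λ ≤ b k := by
      rcases hupp with h | h
      · omega
      · exact h
    have hpj := hp j hjN
    have hrj := hr j hjN
    have hpjγ := hpγ j hjN
    have hpkγ := hpγ k hkN
    have hrk := hr k hkN
    -- main estimate: C ≤ r j / p j ^ γ
    have hCk : C ≤ r k / p k ^ γ := by
      rw [hb k] at hupp'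
      have h1 : Λ + R ≤ r k / p k ^ γ * S := by linarith
      have h2 := mul_le_mul_of_nonneg_right h1 hpkγ.le
      have h3 : r k / p k ^ γ * S * p k ^ γ = r k * S := by field_simp
      rw [hC, div_le_div_iff₀ hSpos hpkγ]
      linarith
    have hCj : C ≤ r j / p j ^ γ := by
      have hs := hsorted k j hkj hjN
      rw [div_le_div_iff₀ hrj hrk] at hs
      have h2 : r k / p k ^ γ ≤ r j / p j ^ γ := by
        rw [div_le_div_iff₀ hpkγ hpjγ]; nlinarith
      linarith
    have hCle : C * p j ^ γ ≤ r j := by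
      calc C * p j ^ γ ≤ r j / p j ^ γ * p j ^ γ := by
            apply mul_le_mul_of_nonneg_right hCj hpjγ.le
        _ = r j := div_mul_cancel₀ _ (ne_of_gt hpjγ)
    have hzneg : -(1 / γ) ≤ 0 := by
      have h0 : 0 < 1 / γ := by positivity
      linarith
    have hstep : r j ^ (-(1 / γ)) ≤ (C * p j ^ γ) ^ (-(1 / γ)) :=
      Real.rpow_le_rpow_of_nonpos (by positivity) hCle hzneg
    have hrw : (C * p j ^ γ) ^ (-(1 / γ)) = C ^ (-(1 / γ)) * (p j)⁻¹ := by
      rw [Real.mul_rpow hCpos.le hpjγ.le, ← Real.rpow_mul hpj.le]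
      have hexp : γ * -(1 / γ) = -1 := by field_simp
      rw [hexp, Real.rpow_neg_one]
    have hfin : p j * r j ^ (-(1 / γ)) ≤ C ^ (-(1 / γ)) := by
      rw [hrw] at hstep
      have := mul_le_mul_of_nonneg_left hstep hpj.le
      calc p j * r j ^ (-(1 / γ)) ≤ p j * (C ^ (-(1 / γ)) * (p j)⁻¹) := this
        _ = C ^ (-(1 / γ)) := by field_simp
    rw [hDval, hDj]
    nlinarith [hfin]
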